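/- Let T₁, T₂ be geodesic simplices in H^n, B₁, B₂ balls intersecting all facets of T₁ and T₂ respectively, and P a hyperplane strictly separating B₁ from B₂. Then at least 2 vertices of T₁ lie on the B₁-side of P and at least 2 vertices of T₂ lie on the B₂-side of P. -/

import Mathlib

/-- Minkowski inner product on `ℝ^{1,n}`. -/
def minkS (n : ℕ) (x y : Fin (n + 1) → ℝ) : ℝ :=
  -(x 0 * y 0) + ∑ i : Fin n, x i.succ * y i.succ

/-- Membership in the hyperboloid model of `ℍⁿ`. -/
def onHyp (n : ℕ) (x : Fin (n + 1) → ℝ) : Prop :=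
  minkS n x x = -1 ∧ 0 < x 0

/-- The facet of the geodesic simplex with vertices `v` opposite vertex `v i`
(hyperbolic convex hull of the other vertices, in the hyperboloid model). -/
def hFacet (n : ℕ) (v : Fin (n + 1) → (Fin (n + 1) → ℝ)) (i : Fin (n + 1)) :
    Set (Fin (n + 1) → ℝ) :=
  {y | ∃ c : Fin (n + 1) → ℝ, (∀ j, 0 ≤ c j) ∧ c i = 0 ∧ (∃ j, c j ≠ 0) ∧
    minkS n (∑ j, c j • v j) (∑ j, c j • v j) < 0 ∧
    y = (Real.sqrt (-(minkS n (∑ j, c j • v j) (∑ j, c j • v j))))⁻¹ •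
          ∑ j, c j • v j}

lemma minkS_smul_right (n : ℕ) (a : ℝ) (x y : Fin (n+1) → ℝ) :
    minkS n x (a • y) = a * minkS n x y := by
  simp only [minkS, Pi.smul_apply, smul_eq_mul, mul_add, mul_neg, Finset.mul_sum]
  congr 1
  · ring
  · exact Finset.sum_congr rfl fun i _ => by ring

lemma minkS_smul_left (n : ℕ) (a : ℝ) (x y : Fin (n+1) → ℝ) :
    minkS n (a • x) y = a * minkS n x y := by
  simp only [minkS, Pi.smul_apply, smul_eq_mul, mul_add, mul_neg, Finset.mul_sum]
  congr 1
  · ring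
  · exact Finset.sum_congr rfl fun i _ => by ring

lemma minkS_neg_left (n : ℕ) (x y : Fin (n+1) → ℝ) :
    minkS n (-x) y = -(minkS n x y) := by
  have := minkS_smul_left n (-1) x y
  simpa using this

lemma minkS_add_right (n : ℕ) (x y z : Fin (n+1) → ℝ) :
    minkS n x (y + z) = minkS n x y + minkS n x z := by
  simp only [minkS, Pi.add_apply, mul_add, neg_add, Finset.sum_add_distrib]
  ring

lemma minkS_zero_right (n : ℕ) (x : Fin (n+1) → ℝ) : minkS n x 0 = 0 := by
  simp [minkS]

lemma minkS_sum_right {ι : Type*} (n : ℕ) (x : Fin (n+1) → ℝ) (s : Finset ι)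
    (f : ι → (Fin (n+1) → ℝ)) :
    minkS n x (∑ j ∈ s, f j) = ∑ j ∈ s, minkS n x (f j) := by
  classical
  induction s using Finset.induction with
  | empty => simp [minkS_zero_right]
  | insert _ _ h ih => rw [Finset.sum_insert h, Finset.sum_insert h, minkS_add_right, ih]

/-- Key lemma: if a ball-type condition holds on a point of every facet, and every
hyperboloid point satisfying the condition is strictly on the negative side of `u`,
then at least two vertices are on the closed negative side. -/
lemma two_vertices_neg_side (n : ℕ) (v : Fin (n + 1) → (Fin (n + 1) → ℝ))
    (hv : ∀ i, onHyp n (v i)) (u : Fin (n + 1) → ℝ)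
    (cond : (Fin (n + 1) → ℝ) → Prop)
    (hmeets : ∀ i, ∃ y ∈ hFacet n v i, cond y)
    (hsep : ∀ y, onHyp n y → cond y → minkS n u y < 0) :
    ∃ i j : Fin (n + 1), i ≠ j ∧ minkS n u (v i) ≤ 0 ∧ minkS n u (v j) ≤ 0 := by
  by_contra hcon
  push_neg at hcon
  -- choose a (possibly non-existent) "bad" vertex index i₀
  classical
  set A : Fin (n+1) → Prop := fun i => minkS n u (v i) ≤ 0 with hA
  obtain ⟨i₀, hi₀⟩ : ∃ i₀ : Fin (n+1), ∀ j, j ≠ i₀ → 0 < minkS n u (v j) := by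
    by_cases hex : ∃ i, A i
    · obtain ⟨i, hi⟩ := hex
      exact ⟨i, fun j hj => hcon i j (Ne.symm hj) hi⟩
    · push_neg at hex
      exact ⟨0, fun j _ => lt_of_not_ge (hex j)⟩
  obtain ⟨y, ⟨c, hc0, hci, ⟨j₀, hj₀⟩, hQ, hy⟩, hcy⟩ := hmeets i₀
  set w : Fin (n+1) → ℝ := ∑ j, c j • v j with hw
  set Q : ℝ := minkS n w w with hQdef
  have hQneg : Q < 0 := hQ
  have hs : 0 < Real.sqrt (-Q) := Real.sqrt_pos.2 (by linarith)
  set s : ℝ := Real.sqrt (-Q) with hsdef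
  have hs2 : s ^ 2 = -Q := Real.sq_sqrt (by linarith)
  have hj₀pos : 0 < c j₀ := lt_of_le_of_ne (hc0 j₀) (Ne.symm hj₀)
  have hj₀ne : j₀ ≠ i₀ := fun h => hj₀ (h ▸ hci)
  -- y is on the hyperboloid
  have hyhyp : onHyp n y := by
    constructor
    · rw [hy, minkS_smul_left, minkS_smul_right]
      rw [show minkS n w w = Q from rfl]
      field_simp
      nlinarith [hs2]
    · rw [hy]
      have hw0 : 0 < w 0 := by
        rw [hw]
        rw [Finset.sum_apply]
        apply Finset.sum_pos' (fun j _ => by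
          have := (hv j).2
          have := hc0 j
          simp only [Pi.smul_apply, smul_eq_mul]
          positivity)
        exact ⟨j₀, Finset.mem_univ _, by
          simp only [Pi.smul_apply, smul_eq_mul]
          exact mul_pos hj₀pos (hv j₀).2⟩
      simp only [Pi.smul_apply, smul_eq_mul, ← hsdef]
      positivity
  -- but ⟨u, y⟩ ≥ 0
  have hnonneg : 0 ≤ minkS n u y := by
    rw [hy]
    rw [minkS_smul_right, minkS_sum_right]
    apply mul_nonneg (by positivity)
    apply Finset.sum_nonneg
    intro j _
    rw [minkS_smul_right]
    rcases eq_or_ne j i₀ with rfl | hne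
    · rw [hci]; simp
    · exact mul_nonneg (hc0 j) (le_of_lt (hi₀ j hne))
  exact absurd (hsep y hyhyp hcy) (not_lt.2 hnonneg)

/-- Let `T₁, T₂` be geodesic simplices in `ℍⁿ` (vertices `v₁, v₂`), and
`B₁, B₂` closed balls (centers `c₁, c₂`, radii `r₁, r₂`) meeting all facets of `T₁`,
`T₂` respectively.  Let `P` be a hyperplane (unit spacelike normal `u`) strictly
separating `B₁` from `B₂`: every point of `B₁` has `⟨u, ·⟩ < 0` and every point of `B₂`
has `⟨u, ·⟩ > 0`.  Then at least `2` vertices of `T₁` lie on the closed `B₁`-side of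
`P`, and at least `2` vertices of `T₂` lie on the closed `B₂`-side of `P`. -/
theorem two_vertices_each_side
    (n : ℕ) (v₁ v₂ : Fin (n + 1) → (Fin (n + 1) → ℝ))
    (hv₁ : ∀ i, onHyp n (v₁ i)) (hgen₁ : LinearIndependent ℝ v₁)
    (hv₂ : ∀ i, onHyp n (v₂ i)) (hgen₂ : LinearIndependent ℝ v₂)
    (c₁ c₂ : Fin (n + 1) → ℝ) (hc₁ : onHyp n c₁) (hc₂ : onHyp n c₂)
    (r₁ r₂ : ℝ) (hr₁ : 0 ≤ r₁) (hr₂ : 0 ≤ r₂)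
    (hmeets₁ : ∀ i, ∃ y ∈ hFacet n v₁ i, -(minkS n c₁ y) ≤ Real.cosh r₁)
    (hmeets₂ : ∀ i, ∃ y ∈ hFacet n v₂ i, -(minkS n c₂ y) ≤ Real.cosh r₂)
    (u : Fin (n + 1) → ℝ) (hu : minkS n u u = 1)
    (hsep₁ : ∀ y, onHyp n y → -(minkS n c₁ y) ≤ Real.cosh r₁ → minkS n u y < 0)
    (hsep₂ : ∀ y, onHyp n y → -(minkS n c₂ y) ≤ Real.cosh r₂ → 0 < minkS n u y) :
    (∃ i j : Fin (n + 1), i ≠ j ∧ minkS n u (v₁ i) ≤ 0 ∧ minkS n u (v₁ j) ≤ 0) ∧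
    (∃ i j : Fin (n + 1), i ≠ j ∧ 0 ≤ minkS n u (v₂ i) ∧ 0 ≤ minkS n u (v₂ j)) := by
  constructor
  · exact two_vertices_neg_side n v₁ hv₁ u _ hmeets₁ hsep₁
  · have h := two_vertices_neg_side n v₂ hv₂ (-u) _ hmeets₂
      (fun y hy hcy => by rw [minkS_neg_left]; linarith [hsep₂ y hy hcy])
    obtain ⟨i, j, hij, hi, hj⟩ := h
    rw [minkS_neg_left] at hi hj
    exact ⟨i, j, hij, by linarith, by linarith⟩
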